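/- If U is concave and continuous on the space of a-variables, then the value function Φ_U is continuous at every capacity matrix C with C(i,j) > 0 for all i,j ∈ V (i.e. at every interior point of the nonnegative orthant of capacity matrices). -/
import Mathlib


open Finset

noncomputable section

/-- Net outflow of commodity `k` at node `i` for flow `r`. -/
def mcfOut {N : ℕ} (A : Finset (Fin N)) (r : Fin N → Fin N → A → ℝ) (k : A) (i : Fin N) : ℝ :=
  (∑ j, r i j k) - (∑ j, r j i k)

/-- Feasible set of the multi-commodity flow problem with capacity matrix `C`. -/
def mcfFeas {N : ℕ} (A : Finset (Fin N)) (S : A → Finset A) (C : Fin N → Fin N → ℝ) :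
    Set ((Fin N → Fin N → A → ℝ) × (A → A → ℝ)) :=
  { p | (∀ i j k, 0 ≤ p.1 i j k ∧ p.1 i j k ≤ 1) ∧
        (∀ i k, 0 ≤ p.2 i k) ∧
        (∀ (k : A) (i : A), i ∈ S k → p.2 i k ≤ mcfOut A p.1 k i) ∧
        (∀ (k : A) (i : Fin N), i ∉ A → mcfOut A p.1 k i = 0) ∧
        (∀ i j, ∑ k, p.1 i j k ≤ C i j) }

/-- Value function `Φ_U(C)` of the multi-commodity flow problem. -/
def mcfValue {N : ℕ} (A : Finset (Fin N)) (S : A → Finset A)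
    (U : (A → A → ℝ) → ℝ) (C : Fin N → Fin N → ℝ) : ℝ :=
  sSup ((fun p => U p.2) '' mcfFeas A S C)

namespace McfAux

variable {N : ℕ} (A : Finset (Fin N)) (S : A → Finset A)

/-- Zero flow together with an `a` vanishing on constrained coordinates is feasible for any
nonnegative capacity. -/
lemma free_mem_feas {C : Fin N → Fin N → ℝ} (hC : ∀ i j, 0 ≤ C i j) (a : A → A → ℝ)
    (ha : ∀ i k, 0 ≤ a i k ∧ (i ∈ S k → a i k = 0)) :
    ((fun _ _ _ => (0:ℝ)), a) ∈ mcfFeas A S C := by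
  refine ⟨fun i j k => ⟨le_rfl, zero_le_one⟩, fun i k => (ha i k).1, ?_, ?_, ?_⟩
  · intro k i hi
    have h0 : a i k = 0 := (ha i k).2 hi
    show a i k ≤ _
    simp [mcfOut, h0]
  · intro k i _
    simp [mcfOut]
  · intro i j
    simpa using hC i j

/-- Linearity of net outflow. -/
lemma mcfOut_comb (t u : ℝ) (r1 r2 : Fin N → Fin N → A → ℝ) (k : A) (i : Fin N) :
    mcfOut A (fun i j k => t * r1 i j k + u * r2 i j k) k i
      = t * mcfOut A r1 k i + u * mcfOut A r2 k i := by
  simp only [mcfOut, Finset.sum_add_distrib, Finset.mul_sum, mul_sub]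
  ring

/-- Convex combinations of feasible points are feasible for the combined capacity. -/
lemma comb_mem_feas {x y : Fin N → Fin N → ℝ}
    {p q : (Fin N → Fin N → A → ℝ) × (A → A → ℝ)}
    (hp : p ∈ mcfFeas A S x) (hq : q ∈ mcfFeas A S y)
    {t u : ℝ} (ht : 0 ≤ t) (hu : 0 ≤ u) (htu : t + u = 1) :
    ((fun i j k => t * p.1 i j k + u * q.1 i j k),
      (fun i k => t * p.2 i k + u * q.2 i k)) ∈
      mcfFeas A S (fun i j => t * x i j + u * y i j) := by
  obtain ⟨hr1, ha1, hs1, hi1, hc1⟩ := hp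
  obtain ⟨hr2, ha2, hs2, hi2, hc2⟩ := hq
  refine ⟨?_, ?_, ?_, ?_, ?_⟩
  · intro i j k
    constructor
    · exact add_nonneg (mul_nonneg ht (hr1 i j k).1) (mul_nonneg hu (hr2 i j k).1)
    · calc t * p.1 i j k + u * q.1 i j k ≤ t * 1 + u * 1 := by
            exact add_le_add (mul_le_mul_of_nonneg_left (hr1 i j k).2 ht)
              (mul_le_mul_of_nonneg_left (hr2 i j k).2 hu)
        _ = 1 := by rw [mul_one, mul_one, htu]
  · intro i k
    exact add_nonneg (mul_nonneg ht (ha1 i k)) (mul_nonneg hu (ha2 i k))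
  · intro k i hi
    rw [mcfOut_comb]
    exact add_le_add (mul_le_mul_of_nonneg_left (hs1 k i hi) ht)
      (mul_le_mul_of_nonneg_left (hs2 k i hi) hu)
  · intro k i hi
    rw [mcfOut_comb, hi1 k i hi, hi2 k i hi]
    ring
  · intro i j
    have : (∑ k, (t * p.1 i j k + u * q.1 i j k))
        = t * ∑ k, p.1 i j k + u * ∑ k, q.1 i j k := by
      rw [Finset.sum_add_distrib, Finset.mul_sum, Finset.mul_sum]
    rw [this]
    exact add_le_add (mul_le_mul_of_nonneg_left (hc1 i j) ht)
      (mul_le_mul_of_nonneg_left (hc2 i j) hu)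

/-- Uniform upper bound on the utility of feasible points, given a bound `M` on the free set
and a lower bound `m` on the compact negative box. -/
lemma feas_val_bound {U : (A → A → ℝ) → ℝ} (hUconc : ConcaveOn ℝ Set.univ U)
    {C : Fin N → Fin N → ℝ} {p : (Fin N → Fin N → A → ℝ) × (A → A → ℝ)}
    (hp : p ∈ mcfFeas A S C) {M m : ℝ}
    (hM : ∀ a : A → A → ℝ, (∀ i k, 0 ≤ a i k ∧ (i ∈ S k → a i k = 0)) → U a ≤ M)
    (hm : ∀ a : A → A → ℝ, (∀ i k, -(N:ℝ) ≤ a i k ∧ a i k ≤ 0) → m ≤ U a) :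
    U p.2 ≤ 2 * M - m := by
  classical
  obtain ⟨hr, ha, hs, _, _⟩ := hp
  have houtN : ∀ (k : A) (i : Fin N), mcfOut A p.1 k i ≤ N := by
    intro k i
    have h1 : ∑ j, p.1 i j k ≤ ∑ _j : Fin N, (1:ℝ) :=
      Finset.sum_le_sum fun j _ => (hr i j k).2
    have h2 : (0:ℝ) ≤ ∑ j, p.1 j i k := Finset.sum_nonneg fun j _ => (hr j i k).1
    have h3 : ∑ _j : Fin N, (1:ℝ) = N := by simp
    simp only [mcfOut]
    linarith
  set c : A → A → ℝ := fun i k => if i ∈ S k then p.2 i k else 0 with hc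
  have hcN : ∀ i k, 0 ≤ c i k ∧ c i k ≤ N := by
    intro i k
    by_cases h : i ∈ S k
    · simp only [hc, if_pos h]
      exact ⟨ha i k, (hs k i h).trans (houtN k i)⟩
    · simp only [hc, if_neg h]
      exact ⟨le_rfl, Nat.cast_nonneg N⟩
  have h1 : m ≤ U (-c) := by
    apply hm
    intro i k
    simp only [Pi.neg_apply]
    constructor
    · linarith [(hcN i k).2]
    · linarith [(hcN i k).1]
  have hmid : ((1:ℝ)/2) • p.2 + ((1:ℝ)/2) • (-c)
      = fun i k => if i ∈ S k then 0 else p.2 i k / 2 := by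
    funext i k
    simp only [Pi.add_apply, Pi.smul_apply, Pi.neg_apply, smul_eq_mul, hc]
    split <;> ring
  have h2 : U (fun i k => if i ∈ S k then 0 else p.2 i k / 2) ≤ M := by
    apply hM
    intro i k
    constructor
    · split
      · exact le_rfl
      · linarith [ha i k]
    · intro hmem
      simp [hmem]
  have h3 := hUconc.2 (Set.mem_univ p.2) (Set.mem_univ (-c))
    (by norm_num : (0:ℝ) ≤ 1/2) (by norm_num : (0:ℝ) ≤ 1/2) (by norm_num)
  rw [hmid] at h3
  simp only [smul_eq_mul] at h3
  linarith

end McfAux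

/-- If `U` is concave and continuous, then the value function `Φ_U` is continuous
at every capacity matrix with strictly positive entries. -/
theorem mcfValue_continuousAt {N K : ℕ} (hN : 0 < N) (hK : 0 < K)
    (A : Finset (Fin N)) (hA : A.card = K)
    (S : A → Finset A) (hS : ∀ k, (S k).Nonempty)
    (U : (A → A → ℝ) → ℝ) (hUconc : ConcaveOn ℝ Set.univ U) (hUcont : Continuous U)
    (C : Fin N → Fin N → ℝ) (hC : ∀ i j, 0 < C i j) :
    ContinuousAt (mcfValue A S U) C := by
  classical
  set spos : Set (Fin N → Fin N → ℝ) := {D | ∀ i j, 0 < D i j} with hspos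
  have hopen : IsOpen spos := by
    have hrep : spos = ⋂ i, ⋂ j, (fun D : Fin N → Fin N → ℝ => D i j) ⁻¹' Set.Ioi 0 := by
      ext D; simp [hspos, Set.mem_iInter]
    rw [hrep]
    exact isOpen_iInter_of_finite fun i => isOpen_iInter_of_finite fun j =>
      isOpen_Ioi.preimage ((continuous_apply j).comp (continuous_apply i))
  have hCmem : C ∈ spos := hC
  by_cases hB : ∃ M : ℝ, ∀ a : A → A → ℝ, (∀ i k, 0 ≤ a i k ∧ (i ∈ S k → a i k = 0)) → U a ≤ M
  · obtain ⟨M, hM⟩ := hB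
    -- lower bound on the compact negative box
    have hcomp : IsCompact (Set.Icc (fun _ _ => -(N:ℝ)) (0 : A → A → ℝ)) := isCompact_Icc
    obtain ⟨m, hm'⟩ := hcomp.bddBelow_image hUcont.continuousOn
    have hm : ∀ a : A → A → ℝ, (∀ i k, -(N:ℝ) ≤ a i k ∧ a i k ≤ 0) → m ≤ U a := by
      intro a haa
      refine hm' ⟨a, Set.mem_Icc.mpr ⟨?_, ?_⟩, rfl⟩
      · intro i; intro k; exact (haa i k).1
      · intro i; intro k; exact (haa i k).2
    have hbdd : ∀ D : Fin N → Fin N → ℝ, BddAbove ((fun p => U p.2) '' mcfFeas A S D) := by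
      intro D
      refine ⟨2 * M - m, ?_⟩
      rintro v ⟨p, hp, rfl⟩
      exact McfAux.feas_val_bound A S hUconc hp hM hm
    have hne : ∀ D : Fin N → Fin N → ℝ, (∀ i j, 0 ≤ D i j) →
        ((fun p => U p.2) '' mcfFeas A S D).Nonempty := by
      intro D hD
      exact ⟨_, ⟨_, McfAux.free_mem_feas A S hD (fun _ _ => 0)
        (fun i k => ⟨le_rfl, fun _ => rfl⟩), rfl⟩⟩
    have hconc : ConcaveOn ℝ spos (mcfValue A S U) := by
      constructor
      · intro x hx y hy t u ht hu htu
        intro i j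
        simp only [Pi.add_apply, Pi.smul_apply, smul_eq_mul]
        by_cases htz : t = 0
        · have hu1 : u = 1 := by rw [htz] at htu; linarith
          rw [htz, hu1]
          simpa using hy i j
        · have ht' : 0 < t := ht.lt_of_ne (Ne.symm htz)
          have := mul_pos ht' (hx i j)
          have := mul_nonneg hu (hy i j).le
          linarith
      · intro x hx y hy t u ht hu htu
        have hxy : t • x + u • y = fun i j => t * x i j + u * y i j := by
          funext i j
          simp [smul_eq_mul]
        rw [hxy]
        simp only [smul_eq_mul, mcfValue]
        by_cases htz : t = 0
        · have hu1 : u = 1 := by rw [htz] at htu; linarith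
          rw [htz, hu1]
          simp only [zero_mul, one_mul, zero_add]
          exact le_rfl
        by_cases huz : u = 0
        · have ht1 : t = 1 := by rw [huz] at htu; linarith
          rw [huz, ht1]
          simp only [zero_mul, one_mul, mul_zero, add_zero]
          exact le_rfl
        have ht' : 0 < t := ht.lt_of_ne (Ne.symm htz)
        have hu' : 0 < u := hu.lt_of_ne (Ne.symm huz)
        set T1 := (fun p => U p.2) '' mcfFeas A S x with hT1
        set T2 := (fun p => U p.2) '' mcfFeas A S y with hT2
        set T3 := (fun p => U p.2) '' mcfFeas A S (fun i j => t * x i j + u * y i j) with hT3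
        have hne1 : T1.Nonempty := hne x (fun i j => (hx i j).le)
        have hne2 : T2.Nonempty := hne y (fun i j => (hy i j).le)
        have key : ∀ v1 ∈ T1, ∀ v2 ∈ T2, t * v1 + u * v2 ≤ sSup T3 := by
          rintro _ ⟨p, hp, rfl⟩ _ ⟨q, hq, rfl⟩
          have hfeas := McfAux.comb_mem_feas A S hp hq ht hu htu
          have hcmp := hUconc.2 (Set.mem_univ p.2) (Set.mem_univ q.2) ht hu htu
          have heq : t • p.2 + u • q.2 = fun i k => t * p.2 i k + u * q.2 i k := by
            funext i k
            simp [smul_eq_mul]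
          rw [heq] at hcmp
          simp only [smul_eq_mul] at hcmp
          exact hcmp.trans (le_csSup (hbdd _) ⟨_, hfeas, rfl⟩)
        have step1 : ∀ v1 ∈ T1, t * v1 + u * sSup T2 ≤ sSup T3 := by
          intro v1 hv1
          have h2 : sSup T2 ≤ (sSup T3 - t * v1) / u := by
            refine csSup_le hne2 fun v2 hv2 => ?_
            rw [le_div_iff₀ hu']
            linarith [key v1 hv1 v2 hv2]
          rw [le_div_iff₀ hu'] at h2
          linarith
        have step2 : sSup T1 ≤ (sSup T3 - u * sSup T2) / t := by
          refine csSup_le hne1 fun v1 hv1 => ?_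
          rw [le_div_iff₀ ht']
          linarith [step1 v1 hv1]
        rw [le_div_iff₀ ht'] at step2
        linarith
    exact (hconc.continuousOn hopen).continuousAt (hopen.mem_nhds hCmem)
  · push_neg at hB
    have hzero : ∀ D ∈ spos, mcfValue A S U D = 0 := by
      intro D hD
      apply Real.sSup_of_not_bddAbove
      rintro ⟨M, hM⟩
      obtain ⟨a, ha, hMa⟩ := hB M
      exact absurd (hM ⟨_, McfAux.free_mem_feas A S (fun i j => (hD i j).le) a ha, rfl⟩)
        (not_le.mpr hMa)
    have hev : mcfValue A S U =ᶠ[nhds C] fun _ => (0:ℝ) :=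
      Filter.eventually_of_mem (hopen.mem_nhds hCmem) fun D hD => hzero D hD
    exact ContinuousAt.congr continuousAt_const hev.symm
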